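/- Let n ≥ 1 and parameters α_i ≥ 1, γ_i ≥ 1, β_i > 0 with α_j + β_j ≥ 2 for some j. If (e − 1)·∏_{i=1}^n [Γ(β_i)]^{γ_i} < ∏_{i=1}^n [Γ(α_i + β_i)]^{γ_i}, then the normalized multi-index Le Roy type function 𝔽(z) = z + ∑_{k=1}^∞ A_{k+1} z^{k+1}, with A_{k+1} = ∏_i[Γ(β_i)]^{γ_i} / ∏_i[Γ(α_i k + β_i)]^{γ_i}, satisfies |𝔽(z)/z − 1| < 1 for all 0 < |z| < 1. -/

import Mathlib

open Real Finset

theorem multi_leroy_mcgregor_bound (n : ℕ) (hn : 1 ≤ n)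
    (α β γ : Fin n → ℝ)
    (hα : ∀ i, 1 ≤ α i) (hγ : ∀ i, 1 ≤ γ i) (hβ : ∀ i, 0 < β i)
    (hj : ∃ j, 2 ≤ α j + β j)
    (hcond : (Real.exp 1 - 1) * ∏ i, (Real.Gamma (β i)) ^ γ i <
      ∏ i, (Real.Gamma (α i + β i)) ^ γ i) :
    ∀ z : ℂ, 0 < ‖z‖ → ‖z‖ < 1 →
      ‖((z + ∑' k : ℕ,
            ((∏ i, (Real.Gamma (β i)) ^ γ i) /
              (∏ i, (Real.Gamma (α i * (k + 1 : ℕ) + β i)) ^ γ i) : ℝ) * z ^ (k + 2)) / z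
          - 1)‖ < 1 := by
  obtain ⟨j, hj2⟩ := hj
  intro z hz0 hz1
  have hzne : z ≠ 0 := by
    intro h; simp [h] at hz0
  set r := ‖z‖ with hr
  set B : ℝ := ∏ i, (Real.Gamma (β i)) ^ γ i with hBdef
  set C : ℕ → ℝ := fun m => ∏ i, (Real.Gamma (α i * m + β i)) ^ γ i with hCdef
  have hxpos : ∀ (i : Fin n) (m : ℕ), 0 < α i * m + β i := fun i m =>
    add_pos_of_nonneg_of_pos (mul_nonneg (le_trans zero_le_one (hα i)) m.cast_nonneg) (hβ i)
  have hBpos : 0 < B := prod_pos fun i _ => rpow_pos_of_pos (Gamma_pos_of_pos (hβ i)) _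
  have hCpos : ∀ m, 0 < C m := fun m =>
    prod_pos fun i _ => rpow_pos_of_pos (Gamma_pos_of_pos (hxpos i m)) _
  have hC1 : C 1 = ∏ i, (Real.Gamma (α i + β i)) ^ γ i := by
    simp only [hCdef, Nat.cast_one, mul_one]
  -- key step : (m+1) * C m ≤ C (m+1) for m ≥ 1
  have key : ∀ m : ℕ, 1 ≤ m → ((m : ℝ) + 1) * C m ≤ C (m + 1) := by
    intro m hm
    have hm1 : (1 : ℝ) ≤ (m : ℝ) := by exact_mod_cast hm
    have hx1 : ∀ i : Fin n, (1 : ℝ) ≤ α i * m + β i := by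
      intro i
      have := hβ i
      nlinarith [hα i, hm1]
    have step1 : ∀ i : Fin n,
        (α i * m + β i) ^ (γ i) * (Real.Gamma (α i * m + β i)) ^ γ i
          ≤ (Real.Gamma (α i * (m + 1 : ℕ) + β i)) ^ γ i := by
      intro i
      set x : ℝ := α i * m + β i with hxdef
      have hxp : 0 < x := hxpos i m
      have h1 : x * Real.Gamma x ≤ Real.Gamma (α i * (m + 1 : ℕ) + β i) := by
        have e1 : Real.Gamma (x + 1) = x * Real.Gamma x := Real.Gamma_add_one (ne_of_gt hxp)
        have hmem1 : (x + 1) ∈ Set.Ici (2 : ℝ) := by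
          simp only [Set.mem_Ici]; linarith [hx1 i]
        have hle : x + 1 ≤ α i * (m + 1 : ℕ) + β i := by
          push_cast
          have := hα i
          nlinarith
        have hmem2 : (α i * (m + 1 : ℕ) + β i) ∈ Set.Ici (2 : ℝ) := by
          simp only [Set.mem_Ici] at hmem1 ⊢; linarith
        calc x * Real.Gamma x = Real.Gamma (x + 1) := e1.symm
          _ ≤ Real.Gamma (α i * (m + 1 : ℕ) + β i) :=
            Real.Gamma_strictMonoOn_Ici.monotoneOn hmem1 hmem2 hle
      have h2 : (x * Real.Gamma x) ^ (γ i) ≤ (Real.Gamma (α i * (m + 1 : ℕ) + β i)) ^ γ i :=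
        Real.rpow_le_rpow (mul_nonneg hxp.le (Real.Gamma_pos_of_pos hxp).le) h1
          (le_trans zero_le_one (hγ i))
      calc x ^ (γ i) * (Real.Gamma x) ^ γ i = (x * Real.Gamma x) ^ (γ i) :=
            (Real.mul_rpow hxp.le (Real.Gamma_pos_of_pos hxp).le).symm
        _ ≤ _ := h2
    have hprodsplit :
        (∏ i, (α i * m + β i) ^ (γ i)) * C m ≤ C (m + 1) := by
      rw [← prod_mul_distrib]
      exact prod_le_prod (fun i _ => mul_nonneg (Real.rpow_nonneg (hxpos i m).le _)
        (Real.rpow_nonneg (Real.Gamma_pos_of_pos (hxpos i m)).le _)) (fun i _ => step1 i)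
    refine le_trans (mul_le_mul_of_nonneg_right ?_ (hCpos m).le) hprodsplit
    have hfac1 : ∀ i ∈ Finset.univ (α := Fin n), (1 : ℝ) ≤ (α i * m + β i) ^ (γ i) :=
      fun i _ => Real.one_le_rpow (hx1 i) (le_trans zero_le_one (hγ i))
    have hxj : (m : ℝ) + 1 ≤ α j * m + β j := by nlinarith [hα j, hβ j]
    calc (m : ℝ) + 1 ≤ α j * m + β j := hxj
      _ = (α j * m + β j) ^ (1 : ℝ) := (Real.rpow_one _).symm
      _ ≤ (α j * m + β j) ^ (γ j) :=
          Real.rpow_le_rpow_of_exponent_le (le_trans (by linarith) hxj) (hγ j)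
      _ ≤ ∏ i, (α i * m + β i) ^ (γ i) := by
          rw [← Finset.mul_prod_erase univ _ (mem_univ j)]
          have h1e : (1 : ℝ) ≤ ∏ i ∈ univ.erase j, (α i * (m : ℝ) + β i) ^ (γ i) := by
            have h := Finset.prod_le_prod (s := univ.erase j)
              (f := fun _ => (1 : ℝ)) (g := fun i => (α i * (m : ℝ) + β i) ^ (γ i))
              (fun i _ => zero_le_one) (fun i _ => hfac1 i (mem_univ i))
            simpa using h
          exact le_mul_of_one_le_right (Real.rpow_nonneg (le_trans zero_le_one (hx1 j)) _) h1e
  -- factorial bound : (k+1)! * C 1 ≤ C (k+1)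
  have fact : ∀ k : ℕ, ((Nat.factorial (k + 1) : ℝ)) * C 1 ≤ C (k + 1) := by
    intro k
    induction k with
    | zero => simp
    | succ k ih =>
      have h1 := key (k + 1) (by omega)
      have : ((Nat.factorial (k + 2) : ℝ)) * C 1 = ((k : ℝ) + 1 + 1) * ((Nat.factorial (k + 1) : ℝ) * C 1) := by
        rw [Nat.factorial_succ]; push_cast; ring
      rw [this]
      calc ((k : ℝ) + 1 + 1) * ((Nat.factorial (k + 1) : ℝ) * C 1)
          ≤ ((k : ℝ) + 1 + 1) * C (k + 1) :=
            mul_le_mul_of_nonneg_left ih (by positivity)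
        _ ≤ C (k + 2) := by
            have := key (k + 1) (by omega)
            push_cast at this ⊢
            linarith
  -- summability of 1/(k+1)!
  have hsumfact : Summable (fun m : ℕ => (1 : ℝ) / Nat.factorial m) := by
    simpa using Real.summable_pow_div_factorial 1
  have hsum1 : Summable (fun k : ℕ => (1 : ℝ) / Nat.factorial (k + 1)) :=
    hsumfact.comp_injective (add_left_injective 1)
  have hexp : (∑' m : ℕ, (1 : ℝ) / Nat.factorial m) = Real.exp 1 := by
    rw [Real.exp_eq_exp_ℝ, NormedSpace.exp_eq_tsum_div]
    simp
  have hshift : (∑' k : ℕ, (1 : ℝ) / Nat.factorial (k + 1)) = Real.exp 1 - 1 := by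
    have := Summable.tsum_eq_zero_add hsumfact
    rw [hexp] at this
    simp only [Nat.factorial_zero, Nat.cast_one, div_one] at this
    linarith [this]
  -- term bound
  set c : ℝ := B / C 1 * r ^ 2 with hcdef
  have hterm : ∀ k : ℕ, ‖(((B / C (k + 1)) : ℝ) : ℂ) * z ^ (k + 2)‖
      ≤ c * ((1 : ℝ) / Nat.factorial (k + 1)) := by
    intro k
    rw [norm_mul, norm_pow, Complex.norm_real, Real.norm_eq_abs,
      abs_of_pos (div_pos hBpos (hCpos (k + 1)))]
    have h1 : B / C (k + 1) ≤ B / ((Nat.factorial (k + 1) : ℝ) * C 1) :=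
      div_le_div_of_nonneg_left hBpos.le
        (mul_pos (Nat.cast_pos.2 (Nat.factorial_pos (k + 1))) (hCpos 1)) (fact k)
    have h2 : ‖z‖ ^ (k + 2) ≤ r ^ 2 := by
      have : ‖z‖ = r := rfl
      rw [this]
      exact pow_le_pow_of_le_one (by positivity) hz1.le (by omega)
    calc B / C (k + 1) * ‖z‖ ^ (k + 2)
        ≤ B / ((Nat.factorial (k + 1) : ℝ) * C 1) * r ^ 2 := by
          exact mul_le_mul h1 h2 (by positivity)
            (div_nonneg hBpos.le (mul_nonneg (Nat.cast_nonneg _) (hCpos 1).le))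
      _ = c * ((1 : ℝ) / Nat.factorial (k + 1)) := by
          rw [hcdef]; field_simp
  have hgsum : Summable (fun k : ℕ => c * ((1 : ℝ) / Nat.factorial (k + 1))) :=
    hsum1.mul_left c
  have hfsum : Summable (fun k : ℕ => ‖(((B / C (k + 1)) : ℝ) : ℂ) * z ^ (k + 2)‖) :=
    Summable.of_nonneg_of_le (fun k => norm_nonneg _) hterm hgsum
  have hSsum : Summable (fun k : ℕ => (((B / C (k + 1)) : ℝ) : ℂ) * z ^ (k + 2)) :=
    hfsum.of_norm
  have hSbound : ‖∑' k : ℕ, (((B / C (k + 1)) : ℝ) : ℂ) * z ^ (k + 2)‖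
      ≤ c * (Real.exp 1 - 1) := by
    calc ‖∑' k : ℕ, (((B / C (k + 1)) : ℝ) : ℂ) * z ^ (k + 2)‖
        ≤ ∑' k : ℕ, ‖(((B / C (k + 1)) : ℝ) : ℂ) * z ^ (k + 2)‖ :=
          norm_tsum_le_tsum_norm hfsum
      _ ≤ ∑' k : ℕ, c * ((1 : ℝ) / Nat.factorial (k + 1)) :=
          Summable.tsum_le_tsum hterm hfsum hgsum
      _ = c * (Real.exp 1 - 1) := by rw [tsum_mul_left, hshift]
  -- final computation
  have hratio : B / C 1 * (Real.exp 1 - 1) < 1 := by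
    rw [← hC1] at hcond
    rw [div_mul_eq_mul_div, div_lt_one (hCpos 1)]
    linarith [hcond]
  have hSlt : ‖∑' k : ℕ, (((B / C (k + 1)) : ℝ) : ℂ) * z ^ (k + 2)‖ < r := by
    have hr2 : c * (Real.exp 1 - 1) < r ^ 2 := by
      rw [hcdef]
      have hrr : (0 : ℝ) < r ^ 2 := by positivity
      calc B / C 1 * r ^ 2 * (Real.exp 1 - 1)
          = (B / C 1 * (Real.exp 1 - 1)) * r ^ 2 := by ring
        _ < 1 * r ^ 2 := by exact mul_lt_mul_of_pos_right hratio hrr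
        _ = r ^ 2 := one_mul _
    have : r ^ 2 < r := by nlinarith
    linarith [hSbound]
  show ‖
        ((z + ∑' k : ℕ, (((B / C (k + 1)) : ℝ) : ℂ) * z ^ (k + 2)) / z - 1)‖ < 1
  have heq : (z + ∑' k : ℕ, (((B / C (k + 1)) : ℝ) : ℂ) * z ^ (k + 2)) / z - 1
      = (∑' k : ℕ, (((B / C (k + 1)) : ℝ) : ℂ) * z ^ (k + 2)) / z := by
    field_simp; ring
  rw [heq, norm_div]
  rw [div_lt_one hz0]
  calc ‖(∑' k : ℕ, (((B / C (k + 1)) : ℝ) : ℂ) * z ^ (k + 2))‖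
      = ‖∑' k : ℕ, (((B / C (k + 1)) : ℝ) : ℂ) * z ^ (k + 2)‖ := rfl
    _ < r := hSlt
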